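/- Let g ≥ 0, let b_1, b_2 ∈ ℂ[λ] be coprime polynomials of degree at most g+1, let a ∈ ℂ[λ] have degree at most 2g, and set W = b_1'·b_2 − b_2'·b_1. Let p, q ∈ ℂ and assume that each of the polynomials b_1 − p·b_2 and b_1 − q·b_2 has degree exactly g+1 and has g+1 pairwise distinct roots. Then W is nonzero at every root of b_1 − p·b_2 and of b_1 − q·b_2, and the sum over the roots β of b_1 − p·b_2 of a(β)/W(β) equals the sum over the roots β of b_1 − q·b_2 of a(β)/W(β). (That is, the sum of a/W over the fibre f^{−1}(p) of f = b_1/b_2 is independent of p.) -/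

import Mathlib

open Polynomial Finset

-- Lagrange-style: sum of r(β) / ∏_{γ≠β}(β-γ) vanishes when deg r < #s - 1
lemma lag_sum_zero (s : Finset ℂ) (r : Polynomial ℂ)
    (hr : r.degree < ((s.card - 1 : ℕ) : WithBot ℕ)) :
    ∑ β ∈ s, r.eval β / ∏ γ ∈ s.erase β, (β - γ) = 0 := by
  classical
  have hinj : Set.InjOn (id : ℂ → ℂ) s := Function.injective_id.injOn
  have hdeg : r.degree < (s.card : WithBot ℕ) :=
    lt_of_lt_of_le hr (by exact_mod_cast Nat.sub_le _ _)
  have hR := Lagrange.eq_interpolate (v := id) hinj (by simpa using hdeg)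
  have h1 : r.coeff (s.card - 1) = 0 := coeff_eq_zero_of_degree_lt hr
  have h2 : (Lagrange.interpolate s id fun i => r.eval (id i)).coeff (s.card - 1)
      = ∑ i ∈ s, r.eval i * ∏ γ ∈ s.erase i, (i - γ)⁻¹ := by
    rw [Lagrange.interpolate_apply, finset_sum_coeff]
    refine Finset.sum_congr rfl fun i hi => ?_
    rw [coeff_C_mul]
    congr 1
    have hnd : (Lagrange.basis s id i).natDegree = s.card - 1 :=
      Lagrange.natDegree_basis hinj hi
    rw [← hnd, coeff_natDegree]
    rw [Lagrange.basis, leadingCoeff_prod]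
    refine Finset.prod_congr rfl fun j hj => ?_
    have hij : (i : ℂ) ≠ j := fun h => (Finset.mem_erase.mp hj).1 (by simpa using h.symm)
    simp only [Lagrange.basisDivisor, id]
    rw [leadingCoeff_mul, leadingCoeff_C, (monic_X_sub_C (j : ℂ)).leadingCoeff, mul_one]
  have := h1
  rw [hR] at this
  simp only [id] at this h2
  rw [h2] at this
  rw [← this]
  refine Finset.sum_congr rfl fun i hi => ?_
  rw [div_eq_mul_inv, Finset.prod_inv_distrib]

lemma sum_roots_div_deriv (h r : Polynomial ℂ) (h0 : h ≠ 0) (hnd : h.roots.Nodup)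
    (hr : r.degree + 2 ≤ h.degree) :
    ∑ β ∈ h.roots.toFinset, r.eval β / (derivative h).eval β = 0 := by
  classical
  rcases eq_or_ne r 0 with rfl | hr0
  · simp
  set s : Finset ℂ := h.roots.toFinset with hs
  have hcroots : h.roots.card = h.natDegree :=
    splits_iff_card_roots.mp (IsAlgClosed.splits h)
  have hsval : s.val = h.roots := by
    simp [hs, Multiset.toFinset, Multiset.dedup_eq_self.mpr hnd]
  have hcard : s.card = h.natDegree := by
    rw [Finset.card_def, hsval, hcroots]
  -- h = C L * nodal
  have hprod : h = C h.leadingCoeff * Lagrange.nodal s id := by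
    have := (IsAlgClosed.splits h).eq_prod_roots
    rw [Lagrange.nodal_eq, Finset.prod_eq_multiset_prod, hsval]
    exact this
  have hderiv : ∀ β ∈ s, (derivative h).eval β
      = h.leadingCoeff * ∏ γ ∈ s.erase β, (β - γ) := by
    intro β hβ
    conv_lhs => rw [hprod]
    rw [derivative_C_mul, eval_mul, eval_C]
    congr 1
    have := Lagrange.eval_nodal_derivative_eval_node_eq (v := (id : ℂ → ℂ)) (i := β) hβ
    simp only [id] at this
    rw [this, Lagrange.eval_nodal]
    rfl
  have hL : h.leadingCoeff ≠ 0 := leadingCoeff_ne_zero.mpr h0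
  have hrlt : r.degree < ((s.card - 1 : ℕ) : WithBot ℕ) := by
    rw [hcard]
    rw [degree_eq_natDegree hr0, degree_eq_natDegree h0] at hr
    have h2 : r.natDegree + 2 ≤ h.natDegree := by exact_mod_cast hr
    rw [degree_eq_natDegree hr0]
    exact_mod_cast by omega
  calc ∑ β ∈ s, r.eval β / (derivative h).eval β
      = ∑ β ∈ s, h.leadingCoeff⁻¹ * (r.eval β / ∏ γ ∈ s.erase β, (β - γ)) := by
        refine Finset.sum_congr rfl fun β hβ => ?_
        rw [hderiv β hβ, div_mul_eq_div_div_swap, div_eq_mul_inv (r.eval β / _)]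
        ring
    _ = h.leadingCoeff⁻¹ * ∑ β ∈ s, r.eval β / ∏ γ ∈ s.erase β, (β - γ) := by
        rw [Finset.mul_sum]
    _ = 0 := by rw [lag_sum_zero s r hrlt, mul_zero]

lemma deriv_ne_zero (F : Polynomial ℂ) (hF : F ≠ 0) (hnd : F.roots.Nodup) {β : ℂ}
    (hβ : F.eval β = 0) : (derivative F).eval β ≠ 0 := by
  have hsep : F.Separable :=
    (nodup_roots_iff_of_splits hF (IsAlgClosed.splits F)).mp hnd
  obtain ⟨u, v, huv⟩ := hsep
  intro h0
  have := congrArg (eval β) huv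
  simp [hβ, h0] at this

theorem stmt13 (g : ℕ) (b₁ b₂ a : Polynomial ℂ)
    (hdeg1 : b₁.degree ≤ (g + 1 : ℕ)) (hdeg2 : b₂.degree ≤ (g + 1 : ℕ))
    (hcop : ∀ μ : ℂ, ¬ (b₁.eval μ = 0 ∧ b₂.eval μ = 0))
    (ha : a.degree ≤ (2 * g : ℕ))
    (p q : ℂ)
    (hdegp : (b₁ - C p * b₂).degree = (g + 1 : ℕ))
    (hnodupp : (b₁ - C p * b₂).roots.Nodup)
    (hdegq : (b₁ - C q * b₂).degree = (g + 1 : ℕ))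
    (hnodupq : (b₁ - C q * b₂).roots.Nodup) :
    (∀ β : ℂ, (b₁ - C p * b₂).eval β = 0 →
      (derivative b₁ * b₂ - derivative b₂ * b₁).eval β ≠ 0) ∧
    (∀ β : ℂ, (b₁ - C q * b₂).eval β = 0 →
      (derivative b₁ * b₂ - derivative b₂ * b₁).eval β ≠ 0) ∧
    ∑ β ∈ (b₁ - C p * b₂).roots.toFinset,
        a.eval β / (derivative b₁ * b₂ - derivative b₂ * b₁).eval β
      = ∑ β ∈ (b₁ - C q * b₂).roots.toFinset,
          a.eval β / (derivative b₁ * b₂ - derivative b₂ * b₁).eval β := by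
  classical
  set W : Polynomial ℂ := derivative b₁ * b₂ - derivative b₂ * b₁ with hW
  -- general facts for any parameter c
  have key : ∀ c : ℂ, (b₁ - C c * b₂).degree = (g + 1 : ℕ) →
      (b₁ - C c * b₂).roots.Nodup →
      (b₁ - C c * b₂) ≠ 0 ∧
      (∀ β : ℂ, (b₁ - C c * b₂).eval β = 0 →
        b₂.eval β ≠ 0 ∧ (derivative (b₁ - C c * b₂)).eval β ≠ 0 ∧
        W.eval β = (derivative (b₁ - C c * b₂)).eval β * b₂.eval β) := by
    intro c hdeg hnd
    have hne : (b₁ - C c * b₂) ≠ 0 := by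
      intro h; rw [h, degree_zero] at hdeg; exact WithBot.bot_ne_coe hdeg
    refine ⟨hne, fun β hβ => ?_⟩
    have hb2 : b₂.eval β ≠ 0 := by
      intro h2
      have h1 : b₁.eval β = 0 := by
        have := hβ; simp only [eval_sub, eval_mul, eval_C, h2, mul_zero, sub_zero] at this
        exact this
      exact hcop β ⟨h1, h2⟩
    have hd : (derivative (b₁ - C c * b₂)).eval β ≠ 0 := deriv_ne_zero _ hne hnd hβ
    refine ⟨hb2, hd, ?_⟩
    have hWid : W = derivative (b₁ - C c * b₂) * b₂ - derivative b₂ * (b₁ - C c * b₂) := by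
      simp only [hW, derivative_sub, derivative_mul, derivative_C, zero_mul, zero_add]
      ring
    rw [hWid]
    simp [hβ]
  obtain ⟨hFne, hFfacts⟩ := key p hdegp hnodupp
  obtain ⟨hGne, hGfacts⟩ := key q hdegq hnodupq
  have hWp : ∀ β : ℂ, (b₁ - C p * b₂).eval β = 0 → W.eval β ≠ 0 := by
    intro β hβ
    obtain ⟨h1, h2, h3⟩ := hFfacts β hβ
    rw [h3]; exact mul_ne_zero h2 h1
  have hWq : ∀ β : ℂ, (b₁ - C q * b₂).eval β = 0 → W.eval β ≠ 0 := by
    intro β hβ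
    obtain ⟨h1, h2, h3⟩ := hGfacts β hβ
    rw [h3]; exact mul_ne_zero h2 h1
  refine ⟨hWp, hWq, ?_⟩
  rcases eq_or_ne p q with rfl | hpq
  · rfl
  -- main case
  set F := b₁ - C p * b₂ with hFdef
  set G := b₁ - C q * b₂ with hGdef
  have hFG : F * G ≠ 0 := mul_ne_zero hFne hGne
  have hdisj : ∀ β : ℂ, F.eval β = 0 → G.eval β ≠ 0 := by
    intro β hβ hG
    have hb2 := (hFfacts β hβ).1
    have : G.eval β - F.eval β = (p - q) * b₂.eval β := by
      simp [hFdef, hGdef]; ring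
    rw [hβ, hG] at this
    simp only [sub_zero] at this
    exact hb2 (by
      have := this.symm
      rcases mul_eq_zero.mp (by rw [← this]) with h | h
      · exact absurd h (sub_ne_zero_of_ne hpq)
      · exact h)
  have hGval : ∀ β : ℂ, F.eval β = 0 → G.eval β = (p - q) * b₂.eval β := by
    intro β hβ
    have : G.eval β - F.eval β = (p - q) * b₂.eval β := by
      simp [hFdef, hGdef]; ring
    rw [hβ, sub_zero] at this; exact this
  have hFval : ∀ β : ℂ, G.eval β = 0 → F.eval β = (q - p) * b₂.eval β := by
    intro β hβ
    have : F.eval β - G.eval β = (q - p) * b₂.eval β := by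
      simp [hFdef, hGdef]; ring
    rw [hβ, sub_zero] at this; exact this
  have hrootsmul : (F * G).roots = F.roots + G.roots := roots_mul hFG
  have hmdisj : Disjoint F.roots G.roots := Multiset.disjoint_left.mpr
    (fun {β} hβF hβG => hdisj β ((mem_roots hFne).mp hβF) ((mem_roots hGne).mp hβG))
  have hndFG : (F * G).roots.Nodup := by
    rw [hrootsmul, Multiset.nodup_add]
    exact ⟨hnodupp, hnodupq, hmdisj⟩
  have htoF : (F * G).roots.toFinset = F.roots.toFinset ∪ G.roots.toFinset := by
    rw [hrootsmul, Multiset.toFinset_add]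
  have hfdisj : Disjoint F.roots.toFinset G.roots.toFinset := by
    rw [Finset.disjoint_left]
    intro β hβF hβG
    exact Multiset.disjoint_left.mp hmdisj (Multiset.mem_toFinset.mp hβF)
      (Multiset.mem_toFinset.mp hβG)
  have hdegFG : a.degree + 2 ≤ (F * G).degree := by
    rw [degree_mul, hdegp, hdegq]
    calc a.degree + 2 ≤ ((2 * g : ℕ) : WithBot ℕ) + 2 := add_le_add_left ha 2
      _ = ((g + 1 : ℕ) : WithBot ℕ) + ((g + 1 : ℕ) : WithBot ℕ) := by
          push_cast; ring
  have hsum := sum_roots_div_deriv (F * G) a hFG hndFG hdegFG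
  rw [htoF, Finset.sum_union hfdisj] at hsum
  -- rewrite each half
  have hFhalf : ∑ β ∈ F.roots.toFinset, a.eval β / (derivative (F * G)).eval β
      = (p - q)⁻¹ * ∑ β ∈ F.roots.toFinset, a.eval β / W.eval β := by
    rw [Finset.mul_sum]
    refine Finset.sum_congr rfl fun β hβ => ?_
    have hβ0 : F.eval β = 0 := (mem_roots hFne).mp (Multiset.mem_toFinset.mp hβ)
    obtain ⟨hb2, hd, hWeq⟩ := hFfacts β hβ0
    rw [derivative_mul]
    simp only [eval_add, eval_mul, hβ0, zero_mul, mul_zero, add_zero, zero_add]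
    rw [hGval β hβ0, hWeq]
    have hc : (p - q) ≠ 0 := sub_ne_zero_of_ne hpq
    field_simp
    try ring
    try simp
  have hGhalf : ∑ β ∈ G.roots.toFinset, a.eval β / (derivative (F * G)).eval β
      = (q - p)⁻¹ * ∑ β ∈ G.roots.toFinset, a.eval β / W.eval β := by
    rw [Finset.mul_sum]
    refine Finset.sum_congr rfl fun β hβ => ?_
    have hβ0 : G.eval β = 0 := (mem_roots hGne).mp (Multiset.mem_toFinset.mp hβ)
    obtain ⟨hb2, hd, hWeq⟩ := hGfacts β hβ0
    rw [derivative_mul]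
    simp only [eval_add, eval_mul, hβ0, zero_mul, mul_zero, add_zero, zero_add]
    rw [hFval β hβ0, hWeq]
    have hc : (q - p) ≠ 0 := sub_ne_zero_of_ne hpq.symm
    field_simp
    try ring
    try simp
  rw [hFhalf, hGhalf] at hsum
  have hpq' : (p - q) ≠ 0 := sub_ne_zero_of_ne hpq
  have hqp' : (q - p) ≠ 0 := sub_ne_zero_of_ne (Ne.symm hpq)
  have : (q - p)⁻¹ = -(p - q)⁻¹ := by
    rw [show q - p = -(p - q) from by ring, inv_neg]
  rw [this] at hsum
  have heq : (p - q)⁻¹ * (∑ β ∈ F.roots.toFinset, a.eval β / W.eval β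
      - ∑ β ∈ G.roots.toFinset, a.eval β / W.eval β) = 0 := by
    linear_combination hsum
  rcases mul_eq_zero.mp heq with h | h
  · exact absurd h (inv_ne_zero hpq')
  · exact sub_eq_zero.mp h
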